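/- The momentum-twistor BCFW shift corresponds to a momentum-space BCFW shift of the region momentum: with the shifted twistor components λ̂ₙ := λₙ + w·λ_{n−1} and μ̂ₙ := μₙ + w·μ_{n−1}, and the region-momentum matrices x₁ := (μₙ⊗λ₁ − μ₁⊗λₙ)/⟨λₙ λ₁⟩ and x̂₁ := (μ̂ₙ⊗λ₁ − μ₁⊗λ̂ₙ)/⟨λ̂ₙ λ₁⟩, one has exactly x̂₁ = x₁ − z·(λ̃ₙ ⊗ λ₁), where z := w·⟨λ_{n−1} λₙ⟩/(w·⟨λ_{n−1} λ₁⟩ + ⟨λₙ λ₁⟩) and λ̃ₙ := (⟨λ_{n−1} λ₁⟩·μₙ + ⟨λ₁ λₙ⟩·μ_{n−1} + ⟨λₙ λ_{n−1}⟩·μ₁)/(⟨λ_{n−1} λₙ⟩·⟨λₙ λ₁⟩). In particular the shift of x₁ is the rank-one bispinor z·λ₁λ̃ₙ. -/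

import Mathlib

set_option maxHeartbeats 1600000


/-- The antisymmetric two-component spinor bracket `⟨u v⟩ = u₀v₁ − u₁v₀`. -/
def br2 (u v : Fin 2 → ℂ) : ℂ := u 0 * v 1 - u 1 * v 0

/-- The rank-one bispinor (outer product) `(u⊗v)(a,b) = u(a)·v(b)`. -/
def tens (u v : Fin 2 → ℂ) : Matrix (Fin 2) (Fin 2) ℂ := Matrix.of fun a b => u a * v b

/-- The momentum-twistor BCFW shift `Ẑₙ = Zₙ + w·Z_{n−1}` corresponds to the momentum-space
shift `x̂₁ = x₁ − z·(λ̃ₙ ⊗ λ₁)` of the region momentum, with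
`z = w⟨λ_{n−1}λₙ⟩/(w⟨λ_{n−1}λ₁⟩ + ⟨λₙλ₁⟩)` and
`λ̃ₙ = (⟨λ_{n−1}λ₁⟩μₙ + ⟨λ₁λₙ⟩μ_{n−1} + ⟨λₙλ_{n−1}⟩μ₁)/(⟨λ_{n−1}λₙ⟩⟨λₙλ₁⟩)`. -/
theorem momentum_twistor_shift_is_momentum_space_BCFW_shift
    (lnm1 lN l1 mnm1 mN m1 : Fin 2 → ℂ) (w : ℂ)
    (h1 : br2 lN l1 ≠ 0) (h2 : br2 lnm1 lN ≠ 0)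
    (h3 : w * br2 lnm1 l1 + br2 lN l1 ≠ 0) :
    (br2 (lN + w • lnm1) l1)⁻¹ • (tens (mN + w • mnm1) l1 - tens m1 (lN + w • lnm1)) =
      (br2 lN l1)⁻¹ • (tens mN l1 - tens m1 lN) -
        (w * br2 lnm1 lN / (w * br2 lnm1 l1 + br2 lN l1)) •
          tens ((br2 lnm1 lN * br2 lN l1)⁻¹ •
            (br2 lnm1 l1 • mN + br2 l1 lN • mnm1 + br2 lN lnm1 • m1)) l1 := by
  have hb : br2 (lN + w • lnm1) l1 = w * br2 lnm1 l1 + br2 lN l1 := by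
    simp [br2]; ring
  rw [hb]
  ext a b
  fin_cases a <;> fin_cases b <;>
    · simp only [tens, Matrix.sub_apply, Matrix.smul_apply, Matrix.of_apply, Pi.add_apply,
        Pi.smul_apply, smul_eq_mul, Pi.sub_apply, br2, Fin.zero_eta, Fin.mk_one] at *
      set D3 := w * (lnm1 0 * l1 1 - lnm1 1 * l1 0) + (lN 0 * l1 1 - lN 1 * l1 0) with hD3
      set D1 := lN 0 * l1 1 - lN 1 * l1 0 with hD1
      set D2 := lnm1 0 * lN 1 - lnm1 1 * lN 0 with hD2
      clear_value D3 D1 D2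
      field_simp
      subst hD3 hD1 hD2
      ring
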